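/- There exists an absolute constant γ > 0 such that for every n > 2 the two-dimensional hyperbolic cross Γ(γ b_n) contains no nonzero point of the lattice L(n); that is, Γ(γ b_n) ∩ (L(n) \ {0}) = ∅. -/

import Mathlib

/-- Fibonacci numbers with `b₀ = b₁ = 1`. -/
def fibb : ℕ → ℕ
  | 0 => 1
  | 1 => 1
  | n + 2 => fibb (n + 1) + fibb n

/-- Shifted Fibonacci: `gn (k+1) = fibb k`, `gn 0 = 0`. -/
def gn : ℕ → ℕ
  | 0 => 0
  | n + 1 => fibb n

lemma fibb_pos (n : ℕ) : 0 < fibb n := by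
  induction n using Nat.twoStepInduction with
  | zero => simp [fibb]
  | one => simp [fibb]
  | more n ih1 ih2 => simp [fibb]; omega

lemma fibb_succ (m : ℕ) : fibb (m + 1) = fibb m + gn m := by
  cases m with
  | zero => simp [fibb, gn]
  | succ k => simp [fibb, gn, Nat.add_comm]

lemma fibb_mono : Monotone fibb := by
  apply monotone_nat_of_le_succ
  intro n
  rw [fibb_succ]; omega

lemma gn_le (m : ℕ) : gn m ≤ fibb m := by
  cases m with
  | zero => simp [gn]
  | succ k => simpa [gn] using fibb_mono (Nat.le_succ k)

/-- d'Ocagne-type identity. -/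
lemma docagne (m : ℕ) : ∀ t : ℕ,
    (fibb m : ℤ) * fibb (m + t) - (gn m : ℤ) * fibb (m + t + 1) = (-1) ^ m * fibb t := by
  induction m with
  | zero => intro t; simp [fibb, gn]
  | succ k ih =>
    intro t
    have h1 : (fibb (k + 1) : ℤ) = fibb k + gn k := by exact_mod_cast fibb_succ k
    have h2 : (fibb (k + t + 2) : ℤ) = fibb (k + t + 1) + fibb (k + t) := by
      show ((fibb (k + t + 2) : ℕ) : ℤ) = _
      rw [show fibb (k + t + 2) = fibb (k + t + 1) + fibb (k + t) from rfl]
      push_cast; ring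
    have h3 : gn (k + 1) = fibb k := rfl
    have hidx : k + 1 + t = k + t + 1 := by ring
    rw [hidx, h3, show k + t + 1 + 1 = k + t + 2 from rfl, h1, h2]
    have := ih t
    ring_nf
    ring_nf at this
    linarith [this]

/-- Addition formula. -/
lemma fibb_add (a : ℕ) : ∀ b : ℕ, fibb (a + b) = fibb a * fibb b + gn a * gn b := by
  induction a with
  | zero => intro b; simp [fibb, gn]
  | succ k ih =>
    intro b
    have h1 : fibb (k + 1) = fibb k + gn k := fibb_succ k
    have h2 : gn (k + 1) = fibb k := rfl
    have h3 : k + 1 + b = k + (b + 1) := by ring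
    rw [h3, ih (b + 1), fibb_succ b, h1, h2, show gn (b+1) = fibb b from rfl]
    ring

lemma coprime_fibb (n : ℕ) : Nat.gcd (fibb (n + 1)) (fibb n) = 1 := by
  induction n with
  | zero => simp [fibb]
  | succ k ih =>
    rw [show fibb (k + 2) = fibb (k + 1) + fibb k from rfl]
    rw [Nat.gcd_comm] at ih
    rw [Nat.add_comm (fibb (k+1)) (fibb k), Nat.gcd_add_self_left]
    exact ih

lemma fibb_interval (Y : ℕ) (hY : 1 ≤ Y) : ∃ m, fibb m ≤ Y ∧ Y < fibb (m + 1) := by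
  induction Y with
  | zero => omega
  | succ k ih =>
    rcases Nat.eq_or_lt_of_le hY with h | h
    · exact ⟨1, by simp [fibb, ← h], by simp [fibb, ← h]⟩
    · obtain ⟨m, hm1, hm2⟩ := ih (by omega)
      rcases Nat.lt_or_ge (k + 1) (fibb (m + 1)) with h' | h'
      · exact ⟨m, by omega, h'⟩
      · refine ⟨m + 1, by omega, ?_⟩
        have h2 : fibb (m + 1 + 1) = fibb (m + 1) + fibb m := rfl
        have := fibb_pos m
        omega

/-- Best approximation property of Fibonacci ratios. -/
lemma BA (m s : ℕ) (p q : ℤ) (hq0 : 0 < q) (hq1 : q < fibb (m + 1)) :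
    (fibb s : ℤ) ≤ |q * fibb (m + s + 1) - p * fibb (m + s + 2)| := by
  set e : ℤ := (-1) ^ m with he_def
  have he : e * e = 1 := by
    simp [he_def, ← pow_add, (by omega : m + m = 2 * m), pow_mul]
  have hC : (fibb m : ℤ) * fibb m - (gn m : ℤ) * fibb (m + 1) = e := by
    have := docagne m 0
    simpa [fibb] using this
  have hA : (fibb m : ℤ) * fibb (m + s + 1) - (gn m : ℤ) * fibb (m + s + 2) = e * fibb (s + 1) := by
    have := docagne m (s + 1)
    rw [show m + (s + 1) = m + s + 1 by omega] at this; exact this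
  have hB : (fibb (m + 1) : ℤ) * fibb (m + s + 1) - (fibb m : ℤ) * fibb (m + s + 2)
      = -(e * fibb s) := by
    have := docagne (m + 1) s
    rw [show gn (m + 1) = fibb m from rfl] at this
    have h1 : m + 1 + s = m + s + 1 := by omega
    rw [h1, show m + s + 1 + 1 = m + s + 2 from rfl] at this
    rw [this, he_def]
    ring
  set α : ℤ := e * (q * fibb m - p * fibb (m + 1)) with hα
  set β : ℤ := e * (p * fibb m - q * gn m) with hβ
  have hq : α * fibb m + β * fibb (m + 1) = q := by
    rw [hα, hβ]
    linear_combination (e * q) * hC + q * he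
  have hp : α * gn m + β * fibb m = p := by
    rw [hα, hβ]
    linear_combination (e * p) * hC + p * he
  have hr : q * fibb (m + s + 1) - p * fibb (m + s + 2)
      = e * (α * fibb (s + 1) - β * fibb s) := by
    calc q * (fibb (m + s + 1) : ℤ) - p * fibb (m + s + 2)
        = (α * fibb m + β * fibb (m + 1)) * fibb (m + s + 1)
          - (α * gn m + β * fibb m) * fibb (m + s + 2) := by rw [hq, hp]
      _ = α * ((fibb m : ℤ) * fibb (m + s + 1) - (gn m : ℤ) * fibb (m + s + 2))
          + β * ((fibb (m + 1) : ℤ) * fibb (m + s + 1) - (fibb m : ℤ) * fibb (m + s + 2)) := by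
            ring
      _ = α * (e * fibb (s + 1)) + β * (-(e * fibb s)) := by rw [hA, hB]
      _ = e * (α * fibb (s + 1) - β * fibb s) := by ring
  rw [hr, abs_mul, show |e| = 1 by simp [he_def], one_mul]
  clear_value α β
  clear hα hβ hr hA hB hC hp
  clear_value e
  have hfs : (0:ℤ) < fibb s := by exact_mod_cast fibb_pos s
  have hfs1 : (fibb s : ℤ) ≤ fibb (s + 1) := by exact_mod_cast fibb_mono (Nat.le_succ s)
  have hfm : (0:ℤ) < fibb m := by exact_mod_cast fibb_pos m
  have hfm1 : (0:ℤ) < fibb (m + 1) := by exact_mod_cast fibb_pos (m + 1)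
  rcases lt_trichotomy β 0 with hb | hb | hb
  · have hβ1 : β ≤ -1 := by omega
    have hα1 : 1 ≤ α := by nlinarith
    have : (fibb s : ℤ) ≤ α * fibb (s + 1) - β * fibb s := by nlinarith
    calc (fibb s : ℤ) ≤ α * fibb (s + 1) - β * fibb s := this
      _ ≤ |α * fibb (s + 1) - β * fibb s| := le_abs_self _
  · have hα1 : 1 ≤ α := by
      rw [hb] at hq
      simp at hq
      nlinarith
    have : (fibb s : ℤ) ≤ α * fibb (s + 1) - β * fibb s := by
      rw [hb]; nlinarith
    calc (fibb s : ℤ) ≤ α * fibb (s + 1) - β * fibb s := this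
      _ ≤ |α * fibb (s + 1) - β * fibb s| := le_abs_self _
  · have hβ1 : 1 ≤ β := by omega
    have hα1 : α ≤ -1 := by nlinarith
    have : α * fibb (s + 1) - β * fibb s ≤ -(fibb s : ℤ) := by nlinarith
    calc (fibb s : ℤ) ≤ -(α * fibb (s + 1) - β * fibb s) := by linarith
      _ ≤ |α * fibb (s + 1) - β * fibb s| := neg_le_abs _

/-- Best approximation, absolute-value version. -/
lemma BA' (m s : ℕ) (p q : ℤ) (hq0 : q ≠ 0) (hq1 : |q| < fibb (m + 1)) :
    (fibb s : ℤ) ≤ |q * fibb (m + s + 1) - p * fibb (m + s + 2)| := by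
  rcases hq0.lt_or_gt with h | h
  · have habs : |q| = -q := abs_of_neg h
    have := BA m s (-p) (-q) (by omega) (by omega)
    calc (fibb s : ℤ) ≤ |(-q) * fibb (m + s + 1) - (-p) * fibb (m + s + 2)| := this
      _ = |-(q * fibb (m + s + 1) - p * fibb (m + s + 2))| := by ring_nf
      _ = |q * fibb (m + s + 1) - p * fibb (m + s + 2)| := abs_neg _
  · have habs : |q| = q := abs_of_pos h
    exact BA m s p q h (by omega)

/-- Main integer lemma: every nonzero lattice point has big hyperbolic product. -/
lemma main_lemma (t : ℕ) (x y : ℤ) (hxy : ¬(x = 0 ∧ y = 0))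
    (hdvd : (fibb (t + 3) : ℤ) ∣ x + (fibb (t + 2) : ℤ) * y) :
    (fibb (t + 1) : ℤ) ≤ 2 * (max |x| 1 * max |y| 1) := by
  have hf1 : (fibb (t + 1) : ℤ) ≤ fibb (t + 3) := by
    exact_mod_cast fibb_mono (by omega : t + 1 ≤ t + 3)
  have hposn : (0:ℤ) < fibb (t + 3) := by exact_mod_cast fibb_pos (t + 3)
  by_cases hy : y = 0
  · subst hy
    have hx : x ≠ 0 := by tauto
    have hd : (fibb (t + 3) : ℤ) ∣ x := by simpa using hdvd
    have : (fibb (t + 3) : ℤ) ≤ |x| := Int.le_of_dvd (abs_pos.mpr hx) ((dvd_abs _ _).mpr hd)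
    have h1 : (1:ℤ) ≤ |x| := by omega
    calc (fibb (t + 1) : ℤ) ≤ |x| := by omega
      _ ≤ 2 * (max |x| 1 * max |0| 1) := by
          simp [max_eq_left h1]; omega
  · by_cases hx : x = 0
    · subst hx
      have hd : (fibb (t + 3) : ℤ) ∣ (fibb (t + 2) : ℤ) * y := by simpa using hdvd
      have hcop : IsCoprime (fibb (t + 3) : ℤ) (fibb (t + 2) : ℤ) := by
        rw [Int.isCoprime_iff_gcd_eq_one]
        simpa [Int.gcd_natCast_natCast] using coprime_fibb (t + 2)
      have hdy : (fibb (t + 3) : ℤ) ∣ y := hcop.dvd_of_dvd_mul_left hd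
      have : (fibb (t + 3) : ℤ) ≤ |y| := Int.le_of_dvd (abs_pos.mpr hy) ((dvd_abs _ _).mpr hdy)
      have h1 : (1:ℤ) ≤ |y| := by omega
      calc (fibb (t + 1) : ℤ) ≤ |y| := by omega
        _ ≤ 2 * (max |0| 1 * max |y| 1) := by
            simp [max_eq_left h1]; omega
    · -- both nonzero
      have hx1 : (1:ℤ) ≤ |x| := Int.one_le_abs (by simpa using hx)
      have hy1 : (1:ℤ) ≤ |y| := Int.one_le_abs (by simpa using hy)
      rw [max_eq_left hx1, max_eq_left hy1]
      by_cases hybig : (fibb (t + 1) : ℤ) ≤ |y|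
      · nlinarith [abs_pos.mpr hx, abs_pos.mpr hy]
      · push_neg at hybig
        -- |y| < fibb (t+1); find m with fibb m ≤ |y| < fibb (m+1)
        have hY1 : 1 ≤ y.natAbs := by omega
        obtain ⟨m, hm1, hm2⟩ := fibb_interval y.natAbs hY1
        have hmlt : m < t + 1 := by
          by_contra hcon
          push_neg at hcon
          have := fibb_mono hcon
          have habs : (y.natAbs : ℤ) = |y| := Int.abs_eq_natAbs y ▸ rfl
          omega
        obtain ⟨s, hs⟩ : ∃ s, t + 1 = m + s := ⟨t + 1 - m, by omega⟩
        obtain ⟨p, hpeq⟩ := hdvd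
        -- x = p * fibb (t+3) - fibb (t+2) * y
        have hxeq : x = -(y * (fibb (m + s + 1) : ℤ) - p * (fibb (m + s + 2) : ℤ)) := by
          have e1 : m + s + 1 = t + 2 := by omega
          have e2 : m + s + 2 = t + 3 := by omega
          rw [e1, e2]
          linarith [hpeq]
        have hq1 : |y| < (fibb (m + 1) : ℤ) := by
          have habs : (y.natAbs : ℤ) = |y| := Int.abs_eq_natAbs y ▸ rfl
          omega
        have hba : (fibb s : ℤ) ≤ |x| := by
          rw [hxeq, abs_neg]
          exact BA' m s p y hy hq1
        have hym : (fibb m : ℤ) ≤ |y| := by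
          have habs : (y.natAbs : ℤ) = |y| := Int.abs_eq_natAbs y ▸ rfl
          omega
        -- 2 * fibb s * fibb m ≥ fibb (m + s) = fibb (t + 1)
        have hadd : (fibb (m + s) : ℤ) ≤ 2 * ((fibb s : ℤ) * fibb m) := by
          have h := fibb_add m s
          have hg1 : gn m ≤ fibb m := gn_le m
          have hg2 : gn s ≤ fibb s := gn_le s
          have : fibb (m + s) ≤ 2 * (fibb s * fibb m) := by
            calc fibb (m + s) = fibb m * fibb s + gn m * gn s := h
              _ ≤ fibb m * fibb s + fibb m * fibb s := by
                  exact Nat.add_le_add_left (Nat.mul_le_mul hg1 hg2) _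
              _ = 2 * (fibb s * fibb m) := by ring
          exact_mod_cast this
        have hfs0 : (0:ℤ) < fibb s := by exact_mod_cast fibb_pos s
        have hfm0 : (0:ℤ) < fibb m := by exact_mod_cast fibb_pos m
        calc (fibb (t + 1) : ℤ) = fibb (m + s) := by rw [hs]
          _ ≤ 2 * ((fibb s : ℤ) * fibb m) := hadd
          _ ≤ 2 * (|x| * |y|) := by nlinarith

/-- There is an absolute constant `γ > 0` such that for every `n > 2` the two-dimensional
hyperbolic cross `Γ(γ b_n) = {k ∈ ℤ² : max(|k₁|,1) · max(|k₂|,1) ≤ γ b_n}` contains no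
nonzero point of the lattice `L(n) = {k ∈ ℤ² : k₁ + b_{n-1} k₂ ≡ 0 (mod b_n)}`. -/
theorem fibonacci_hyperbolic_cross :
    ∃ γ : ℝ, 0 < γ ∧ ∀ n : ℕ, 2 < n → ∀ k : ℤ × ℤ, k ≠ 0 →
      (fibb n : ℤ) ∣ (k.1 + (fibb (n - 1) : ℤ) * k.2) →
      ¬ ((max |k.1| 1 * max |k.2| 1 : ℤ) : ℝ) ≤ γ * (fibb n : ℝ) := by
  refine ⟨1/9, by norm_num, ?_⟩
  intro n hn k hk hdvd
  obtain ⟨t, rfl⟩ : ∃ t, n = t + 3 := ⟨n - 3, by omega⟩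
  have hsub : t + 3 - 1 = t + 2 := by omega
  rw [hsub] at hdvd
  have hxy : ¬(k.1 = 0 ∧ k.2 = 0) := by
    intro ⟨h1, h2⟩
    exact hk (Prod.ext h1 h2)
  have hmain := main_lemma t k.1 k.2 hxy hdvd
  -- fibb (t+3) ≤ 3 * fibb (t+1)
  have h3 : fibb (t + 3) ≤ 3 * fibb (t + 1) := by
    have e1 : fibb (t + 3) = fibb (t + 2) + fibb (t + 1) := rfl
    have e2 : fibb (t + 2) = fibb (t + 1) + fibb t := rfl
    have := fibb_mono (show t ≤ t + 1 by omega)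
    omega
  have h3' : (fibb (t + 3) : ℤ) ≤ 3 * fibb (t + 1) := by exact_mod_cast h3
  have hpos : (0:ℤ) < fibb (t + 3) := by exact_mod_cast fibb_pos (t + 3)
  -- so 6 * M ≥ fibb (t+3) with M the product
  set M : ℤ := max |k.1| 1 * max |k.2| 1 with hM
  have h6 : (fibb (t + 3) : ℤ) ≤ 6 * M := by linarith
  intro hcon
  have hMR : ((fibb (t + 3) : ℝ)) ≤ 6 * (M : ℝ) := by exact_mod_cast h6
  have hposR : (0:ℝ) < (fibb (t + 3) : ℝ) := by exact_mod_cast hpos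
  nlinarith
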